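/- Let 𝔸 be a finite idempotent algebra and let B be a subset with ∅ ≠ B ⊊ A such that ⟨A^n \ (A \ B)^n⟩_𝔸 ≠ A^n for every n. Then there exists C ⊊ A with B ⊆ C such that A^n \ (A \ C)^n ∈ Inv(𝔸) for every n. -/

import Mathlib

/-- An algebra: a carrier type `A` together with an indexed family of finitary operations. -/
structure MyAlgebra (A : Type) where
  ι : Type
  arity : ι → ℕ
  op : ∀ i : ι, (Fin (arity i) → A) → A

namespace MyAlgebra

variable {A : Type}

/-- A set of `n`-tuples is closed under coordinatewise application of all operations. -/
def Closed (𝔸 : MyAlgebra A) {n : ℕ} (S : Set (Fin n → A)) : Prop :=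
  ∀ i : 𝔸.ι, ∀ γ : Fin (𝔸.arity i) → (Fin n → A),
    (∀ j, γ j ∈ S) → (fun t : Fin n => 𝔸.op i (fun j => γ j t)) ∈ S

/-- The subalgebra of `𝔸^n` generated by `X`. -/
def gen (𝔸 : MyAlgebra A) {n : ℕ} (X : Set (Fin n → A)) : Set (Fin n → A) :=
  ⋂₀ {S : Set (Fin n → A) | X ⊆ S ∧ 𝔸.Closed S}

/-- Polynomially generated powers. -/
def PGP (𝔸 : MyAlgebra A) : Prop :=
  ∃ p : Polynomial ℕ, ∀ n : ℕ, ∃ X : Finset (Fin n → A),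
    X.card ≤ p.eval n ∧ 𝔸.gen (X : Set (Fin n → A)) = Set.univ

/-- Exponentially generated powers. -/
def EGP (𝔸 : MyAlgebra A) : Prop :=
  ∃ b C : ℝ, 1 < b ∧ 0 < C ∧ ∀ n : ℕ, ∀ X : Finset (Fin n → A),
    𝔸.gen (X : Set (Fin n → A)) = Set.univ → C * b ^ n ≤ (X.card : ℝ)

/-- Every operation is idempotent. -/
def Idempotent (𝔸 : MyAlgebra A) : Prop :=
  ∀ i : 𝔸.ι, ∀ a : A, 𝔸.op i (fun _ => a) = a

end MyAlgebra

/-- The number of switches of a tuple: indices `i` with `a i ≠ a (i+1)`,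
encoded as pairs of consecutive indices. -/
def numSwitches {A : Type} [DecidableEq A] {n : ℕ} (a : Fin n → A) : ℕ :=
  (Finset.univ.filter (fun p : Fin n × Fin n =>
    (p.2 : ℕ) = (p.1 : ℕ) + 1 ∧ a p.1 ≠ a p.2)).card

/-- `𝔸` is switchable: for some `r`, every power is generated by tuples with at most `r` switches. -/
def MyAlgebra.Switchable {A : Type} [DecidableEq A] (𝔸 : MyAlgebra A) : Prop :=
  ∃ r : ℕ, ∀ n : ℕ, 𝔸.gen {a : Fin n → A | numSwitches a ≤ r} = Set.univ

/-- A nice relation: not full, and contains every tuple with two equal consecutive entries. -/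
def Nice {A : Type} {m : ℕ} (ρ : Set (Fin m → A)) : Prop :=
  ρ ≠ Set.univ ∧ ∀ c : Fin m → A,
    (∃ i : ℕ, ∃ h : i + 1 < m, c ⟨i, by omega⟩ = c ⟨i + 1, h⟩) → c ∈ ρ

/-- `D_{A,m}`: tuples of length `2m` where some pair `(a_{2i+1}, a_{2i+2})` is equal. -/
def Drel (A : Type) (m : ℕ) : Set (Fin (2 * m) → A) :=
  {a | ∃ i : ℕ, ∃ h : 2 * i + 1 < 2 * m, a ⟨2 * i, by omega⟩ = a ⟨2 * i + 1, h⟩}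

/-- `f` preserves the relation `σ`. -/
def Preserves {A : Type} {s m : ℕ} (f : (Fin s → A) → A) (σ : Set (Fin m → A)) : Prop :=
  ∀ γ : Fin s → (Fin m → A), (∀ j, γ j ∈ σ) → (fun t : Fin m => f (fun j => γ j t)) ∈ σ

/-- `f` is `αβ`-projective. -/
def ABProjective {A : Type} (α β : Set A) {s : ℕ} (f : (Fin s → A) → A) : Prop :=
  ∃ j : Fin s, ∀ a : Fin s → A, ∀ S ∈ ({α, β} : Set (Set A)), a j ∈ S → f a ∈ S

/-- `σ_n(x₁,…,x_{2n}) ⇔ ρ(x₁,x₂) ∨ … ∨ ρ(x_{2n-1},x_{2n})`. -/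
def sigmaRel {A : Type} (ρ : Set (A × A)) (n : ℕ) : Set (Fin (2 * n) → A) :=
  {t | ∃ i : ℕ, ∃ h : 2 * i + 1 < 2 * n, (t ⟨2 * i, by omega⟩, t ⟨2 * i + 1, h⟩) ∈ ρ}


namespace StmtTwelveAux

variable {A : Type}

/-- Tuples having at least one coordinate in `C`. -/
def X (C : Set A) (n : ℕ) : Set (Fin n → A) := {t | ∃ i, t i ∈ C}

lemma subset_gen (𝔸 : MyAlgebra A) {n : ℕ} (Y : Set (Fin n → A)) : Y ⊆ 𝔸.gen Y := by
  intro b hb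
  intro S hS
  exact hS.1 hb

lemma gen_subset (𝔸 : MyAlgebra A) {n : ℕ} {Y S : Set (Fin n → A)}
    (h1 : Y ⊆ S) (h2 : 𝔸.Closed S) : 𝔸.gen Y ⊆ S :=
  Set.sInter_subset_of_mem ⟨h1, h2⟩

lemma gen_closed (𝔸 : MyAlgebra A) {n : ℕ} (Y : Set (Fin n → A)) : 𝔸.Closed (𝔸.gen Y) := by
  intro i γ hγ
  intro S hS
  exact hS.2 i γ (fun j => hγ j S hS)

/-- Claim B: if `b` is generated by `X C n`, then any tuple containing `b` as a subpattern
on distinct coordinates is generated by `X C m`. -/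
lemma claimB (𝔸 : MyAlgebra A) (hid : 𝔸.Idempotent) (C : Set A) {n : ℕ}
    {b : Fin n → A} (hb : b ∈ 𝔸.gen (X C n)) :
    ∀ (m : ℕ) (p : Fin n → Fin m), Function.Injective p →
      ∀ t : Fin m → A, (∀ l, t (p l) = b l) → t ∈ 𝔸.gen (X C m) := by
  classical
  have key : 𝔸.gen (X C n) ⊆ {b : Fin n → A | ∀ (m : ℕ) (p : Fin n → Fin m),
      Function.Injective p → ∀ t : Fin m → A, (∀ l, t (p l) = b l) → t ∈ 𝔸.gen (X C m)} := by
    apply gen_subset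
    · rintro b ⟨i0, hi0⟩ m p hp t ht
      exact subset_gen 𝔸 (X C m) ⟨p i0, by rw [ht i0]; exact hi0⟩
    · intro i γ hγ m p hp t ht
      set u : Fin (𝔸.arity i) → Fin m → A := fun j q =>
        if h : ∃ l, p l = q then γ j (Classical.choose h) else t q with hu
      have hue : ∀ j l, u j (p l) = γ j l := by
        intro j l
        have h : ∃ l', p l' = p l := ⟨l, rfl⟩
        simp only [hu]
        rw [dif_pos h]
        congr 1
        exact hp (Classical.choose_spec h)
      have huo : ∀ j q, (¬ ∃ l, p l = q) → u j q = t q := by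
        intro j q h
        simp only [hu]
        rw [dif_neg h]
      have hmem : ∀ j, u j ∈ 𝔸.gen (X C m) := fun j => hγ j m p hp (u j) (hue j)
      have hout : (fun q => 𝔸.op i (fun j => u j q)) ∈ 𝔸.gen (X C m) :=
        gen_closed 𝔸 (X C m) i u hmem
      have : t = fun q => 𝔸.op i (fun j => u j q) := by
        funext q
        by_cases hq : ∃ l, p l = q
        · obtain ⟨l, rfl⟩ := hq
          rw [ht l]
          simp only [hue]
        · have : (fun j => u j q) = fun _ => t q := by
            funext j; exact huo j q hq
          rw [this, hid i (t q)]
      rw [this]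
      exact hout
  exact key hb

/-- The main inductive absorption lemma. -/
lemma main' (𝔸 : MyAlgebra A) (hid : 𝔸.Idempotent) (C : Set A)
    (hP : ∀ n, 𝔸.gen (X C n) ≠ Set.univ)
    (hmax : ∀ d ∉ C, ∃ m₀, 𝔸.gen (X (insert d C) m₀) = Set.univ) :
    ∀ (k : ℕ) (c : Fin k → A), (∀ j, c j ∉ C) →
      ∀ M : ℕ, (∀ m, M ≤ m → ∀ p : Fin k → Fin m, Function.Injective p →
        ∀ t : Fin m → A, (∀ l, t (p l) = c l) → t ∈ 𝔸.gen (X C m)) → False := by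
  intro k
  induction k with
  | zero =>
    intro c _ M hH
    apply hP M
    apply Set.eq_univ_of_forall
    intro t
    exact hH M le_rfl (fun l => l.elim0) (fun a b _ => a.elim0) t (fun l => l.elim0)
  | succ k ih =>
    intro c hc M hH
    classical
    obtain ⟨m₀, hm₀⟩ := hmax (c 0) (hc 0)
    apply ih (fun j => c j.succ) (fun j => hc j.succ) (M + m₀ + k + 1)
    intro m hm p hp t ht
    -- build an injection e : Fin m₀ → Fin m avoiding the range of p
    let s : Finset (Fin m) := (Finset.image p Finset.univ)ᶜ
    have hcard : s.card = m - k := by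
      have himg : (Finset.image p Finset.univ).card = k := by
        rw [Finset.card_image_of_injective _ hp, Finset.card_univ, Fintype.card_fin]
      simp only [s, Finset.card_compl, himg, Fintype.card_fin]
    have hm₀le : m₀ ≤ s.card := by omega
    let e : Fin m₀ → Fin m := fun j => s.orderEmbOfCardLe hm₀le j
    have he_inj : Function.Injective e := fun a b hab =>
      (s.orderEmbOfCardLe hm₀le).injective hab
    have he_mem : ∀ j l, p l ≠ e j := by
      intro j l hl
      have hmem := Finset.orderEmbOfCardLe_mem s hm₀le j
      simp only [s, Finset.mem_compl, Finset.mem_image, Finset.mem_univ, true_and] at hmem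
      exact hmem ⟨l, hl⟩
    -- Φ plants v on the range of e, t elsewhere
    let Φ : (Fin m₀ → A) → (Fin m → A) := fun v q =>
      if h : ∃ j, e j = q then v (Classical.choose h) else t q
    have hΦe : ∀ v j, Φ v (e j) = v j := by
      intro v j
      have h : ∃ j', e j' = e j := ⟨j, rfl⟩
      simp only [Φ]
      rw [dif_pos h]
      congr 1
      exact he_inj (Classical.choose_spec h)
    have hΦo : ∀ v q, (¬ ∃ j, e j = q) → Φ v q = t q := by
      intro v q h
      simp only [Φ]
      rw [dif_neg h]
    have hSclosed : 𝔸.Closed {v : Fin m₀ → A | Φ v ∈ 𝔸.gen (X C m)} := by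
      intro i γ hγ
      have hout : (fun q => 𝔸.op i (fun j => Φ (γ j) q)) ∈ 𝔸.gen (X C m) :=
        gen_closed 𝔸 (X C m) i (fun j => Φ (γ j)) hγ
      have heq : Φ (fun q' => 𝔸.op i (fun j => γ j q')) =
          fun q => 𝔸.op i (fun j => Φ (γ j) q) := by
        funext q
        by_cases hq : ∃ j', e j' = q
        · obtain ⟨j', rfl⟩ := hq
          exact (hΦe (fun q' => 𝔸.op i fun j => γ j q') j').trans
            (congrArg (𝔸.op i) (funext fun j => (hΦe (γ j) j').symm))
        · exact (hΦo (fun q' => 𝔸.op i fun j => γ j q') q hq).trans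
            (((congrArg (𝔸.op i) (funext fun j => hΦo (γ j) q hq)).trans
              (hid i (t q))).symm)
      show Φ (fun q' => 𝔸.op i fun j => γ j q') ∈ 𝔸.gen (X C m)
      rw [heq]
      exact hout
    have hXD : X (insert (c 0) C) m₀ ⊆ {v : Fin m₀ → A | Φ v ∈ 𝔸.gen (X C m)} := by
      rintro v ⟨j₀, hj₀⟩
      rcases Set.mem_insert_iff.mp hj₀ with heq | hC
      · -- v j₀ = c 0 : use the pattern c via Fin.cons (e j₀) p
        show Φ v ∈ 𝔸.gen (X C m)
        have hqinj : Function.Injective (Fin.cons (e j₀) p : Fin (k + 1) → Fin m) := by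
          intro a b hab
          cases a using Fin.cases with
          | zero =>
            cases b using Fin.cases with
            | zero => rfl
            | succ b' =>
              simp only [Fin.cons_zero, Fin.cons_succ] at hab
              exact absurd hab.symm (he_mem j₀ b')
          | succ a' =>
            cases b using Fin.cases with
            | zero =>
              simp only [Fin.cons_zero, Fin.cons_succ] at hab
              exact absurd hab (he_mem j₀ a')
            | succ b' =>
              simp only [Fin.cons_succ] at hab
              exact congrArg Fin.succ (hp hab)
        apply hH m (by omega) (Fin.cons (e j₀) p) hqinj (Φ v)
        intro l
        refine Fin.cases ?_ ?_ l
        · simp only [Fin.cons_zero]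
          exact (hΦe v j₀).trans heq
        · intro l'
          simp only [Fin.cons_succ]
          have hΦp : Φ v (p l') = t (p l') := by
            apply hΦo
            rintro ⟨j, hj⟩
            exact he_mem j l' hj.symm
          exact hΦp.trans (ht l')
      · exact subset_gen 𝔸 (X C m) ⟨e j₀, (hΦe v j₀).symm ▸ hC⟩
    have hall : ∀ v : Fin m₀ → A, Φ v ∈ 𝔸.gen (X C m) := by
      intro v
      have hsub := gen_subset 𝔸 hXD hSclosed
      rw [hm₀] at hsub
      exact hsub (Set.mem_univ v)
    have htΦ : t = Φ (fun j => t (e j)) := by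
      funext q
      by_cases hq : ∃ j, e j = q
      · obtain ⟨j, rfl⟩ := hq
        exact (hΦe (fun j' => t (e j')) j).symm
      · exact (hΦo (fun j' => t (e j')) q hq).symm
    rw [htΦ]
    exact hall (fun j => t (e j))

end StmtTwelveAux

/-- for a finite idempotent algebra, if the sets of tuples with at least one
coordinate in `B` never generate the full power, then `B` extends to a proper `C ⊊ A` such
that all the relations "some coordinate lies in `C`" are invariant. -/

theorem stmt_12 {A : Type} [Fintype A] (𝔸 : MyAlgebra A) (hid : 𝔸.Idempotent)
    (B : Set A) (hB1 : B.Nonempty) (hB2 : B ≠ Set.univ)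
    (h : ∀ n : ℕ, 𝔸.gen {t : Fin n → A | ∃ i, t i ∈ B} ≠ Set.univ) :
    ∃ C : Set A, C ≠ Set.univ ∧ B ⊆ C ∧
      ∀ n : ℕ, 𝔸.Closed {t : Fin n → A | ∃ i, t i ∈ C} := by
  classical
  open StmtTwelveAux in
  obtain ⟨C, hC, hCmax⟩ := Set.Finite.exists_maximalFor id
    {C : Set A | B ⊆ C ∧ ∀ n, 𝔸.gen (StmtTwelveAux.X C n) ≠ Set.univ}
    (Set.toFinite _) ⟨B, subset_rfl, h⟩
  obtain ⟨hBC, hPC⟩ := hC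
  have hmax : ∀ d ∉ C, ∃ m₀, 𝔸.gen (StmtTwelveAux.X (insert d C) m₀) = Set.univ := by
    intro d hd
    by_contra hcon
    push_neg at hcon
    have hmem : insert d C ∈ {C : Set A | B ⊆ C ∧ ∀ n, 𝔸.gen (StmtTwelveAux.X C n) ≠ Set.univ} :=
      ⟨hBC.trans (Set.subset_insert d C), hcon⟩
    have := hCmax hmem (Set.subset_insert d C)
    simp only [id] at this
    exact hd (this (Set.mem_insert d C))
  have hCuniv : C ≠ Set.univ := by
    intro hCu
    apply hPC 1
    apply Set.eq_univ_of_forall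
    intro t
    exact StmtTwelveAux.subset_gen 𝔸 _ ⟨0, hCu ▸ Set.mem_univ _⟩
  refine ⟨C, hCuniv, hBC, ?_⟩
  intro n i γ hγ
  by_contra hb
  have hbgen : (fun t => 𝔸.op i fun j => γ j t) ∈ 𝔸.gen (StmtTwelveAux.X C n) :=
    StmtTwelveAux.gen_closed 𝔸 _ i γ (fun j => StmtTwelveAux.subset_gen 𝔸 _ (hγ j))
  have hbC : ∀ q, (fun t => 𝔸.op i fun j => γ j t) q ∉ C := by
    intro q hq
    exact hb ⟨q, hq⟩
  exact StmtTwelveAux.main' 𝔸 hid C hPC hmax n _ hbC n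
    (fun m _ p hp t ht => StmtTwelveAux.claimB 𝔸 hid C hbgen m p hp t ht)
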